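/- arXiv:2012.01441 — 2 statements merged into one kernel-verified Lean document; each statement's English description precedes it below -/
import Mathlib

section
/- Let G be a classical system (finite sample space) and let I_A : L(H_A ⊗ ℝ^G) be realized as a family of completely positive trace-preserving maps on H_A conditioned on and updating the classical register G, and similarly I_B on H_B. Then for any initial product state ρ_A ⊗ ρ_B ⊗ p_G with ρ_A, ρ_B density matrices and p_G a probability distribution on G, the output state of A and B after applying I_A then I_B (and marginalizing or post-selecting on G) is separable. -/
open Matrix Finset
open scoped Kronecker ComplexOrder

/-- Extend a map on `A`-matrices to act on the first factor of `A × R`-matrices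
(identity on the second factor). -/
noncomputable def blockFst {A B R : Type*} [Fintype A] [Fintype B] [Fintype R]
    (E : Matrix A A ℂ →ₗ[ℂ] Matrix B B ℂ)
    (M : Matrix (A × R) (A × R) ℂ) : Matrix (B × R) (B × R) ℂ :=
  fun p q => E (fun i j => M (i, p.2) (j, q.2)) p.1 q.1

/-- Extend a map on `B`-matrices to act on the second factor of `R × B`-matrices. -/
noncomputable def blockSnd {B C R : Type*} [Fintype B] [Fintype C] [Fintype R]
    (E : Matrix B B ℂ →ₗ[ℂ] Matrix C C ℂ)
    (M : Matrix (R × B) (R × B) ℂ) : Matrix (R × C) (R × C) ℂ :=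
  fun p q => E (fun i j => M (p.1, i) (q.1, j)) p.2 q.2

/-- Complete positivity: the extension by any finite-dimensional identity preserves
positive semidefiniteness. -/
def IsCP {A : Type*} [Fintype A] (E : Matrix A A ℂ →ₗ[ℂ] Matrix A A ℂ) : Prop :=
  ∀ (R : Type) [Fintype R] [DecidableEq R],
    ∀ M : Matrix (A × R) (A × R) ℂ, M.PosSemidef → (blockFst E M).PosSemidef

def TraceNonincreasing {A : Type*} [Fintype A]
    (E : Matrix A A ℂ →ₗ[ℂ] Matrix A A ℂ) : Prop :=
  ∀ M : Matrix A A ℂ, M.PosSemidef → ((E M).trace).re ≤ (M.trace).re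

def TracePreserving {A : Type*} [Fintype A]
    (E : Matrix A A ℂ →ₗ[ℂ] Matrix A A ℂ) : Prop :=
  ∀ M : Matrix A A ℂ, (E M).trace = M.trace

/-- The tensor product map `E_A ⊗ E_B` acting on `(A × B)`-matrices. -/
noncomputable def prodMap {A B : Type*} [Fintype A] [Fintype B]
    (EA : Matrix A A ℂ →ₗ[ℂ] Matrix A A ℂ) (EB : Matrix B B ℂ →ₗ[ℂ] Matrix B B ℂ)
    (M : Matrix (A × B) (A × B) ℂ) : Matrix (A × B) (A × B) ℂ :=
  blockSnd EB (blockFst EA M)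

/-- The cone of separable positive operators. -/
def SepCone {A B : Type*} [Fintype A] [Fintype B]
    (M : Matrix (A × B) (A × B) ℂ) : Prop :=
  ∃ (n : ℕ) (σA : Fin n → Matrix A A ℂ) (σB : Fin n → Matrix B B ℂ),
    (∀ i, (σA i).PosSemidef) ∧ (∀ i, (σB i).PosSemidef) ∧
    M = ∑ i, σA i ⊗ₖ σB i

def IsDensity {A : Type*} [Fintype A] (ρ : Matrix A A ℂ) : Prop :=
  ρ.PosSemidef ∧ ρ.trace = 1

/-- Separable state: convex combination of product density operators. -/
def SepState {A B : Type*} [Fintype A] [Fintype B]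
    (M : Matrix (A × B) (A × B) ℂ) : Prop :=
  ∃ (n : ℕ) (p : Fin n → ℝ) (σA : Fin n → Matrix A A ℂ) (σB : Fin n → Matrix B B ℂ),
    (∀ i, 0 ≤ p i) ∧ (∑ i, p i = 1) ∧
    (∀ i, IsDensity (σA i)) ∧ (∀ i, IsDensity (σB i)) ∧
    M = ∑ i, (p i : ℂ) • (σA i ⊗ₖ σB i)

/-- One round of an A–G quantum-classical interaction acting on a `G`-indexed ensemble of
joint `A ⊗ B` operators: the classical register is measured and updated while the CP map
`E g g'` acts locally on `A`. -/
noncomputable def stepA {A B G : Type*} [Fintype A] [Fintype B] [Fintype G]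
    (E : G → G → (Matrix A A ℂ →ₗ[ℂ] Matrix A A ℂ))
    (ρ : G → Matrix (A × B) (A × B) ℂ) : G → Matrix (A × B) (A × B) ℂ :=
  fun g' => ∑ g, blockFst (E g g') (ρ g)

/-- One round of a B–G quantum-classical interaction, acting locally on `B`. -/
noncomputable def stepB {A B G : Type*} [Fintype A] [Fintype B] [Fintype G]
    (E : G → G → (Matrix B B ℂ →ₗ[ℂ] Matrix B B ℂ))
    (ρ : G → Matrix (A × B) (A × B) ℂ) : G → Matrix (A × B) (A × B) ℂ :=
  fun g' => ∑ g, blockSnd (E g g') (ρ g)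

/-- A quantum-classical interaction: each branch is completely positive and for each classical
input the total map is trace preserving. -/
def IsQCInteraction {A G : Type*} [Fintype A] [Fintype G]
    (E : G → G → (Matrix A A ℂ →ₗ[ℂ] Matrix A A ℂ)) : Prop :=
  (∀ g g', IsCP (E g g')) ∧
  (∀ g, ∀ M : Matrix A A ℂ, ∑ g', ((E g g') M).trace = M.trace)

section Aux

variable {A B : Type*} [Fintype A] [Fintype B]

lemma psd_of_cp {E : Matrix A A ℂ →ₗ[ℂ] Matrix A A ℂ} (hE : IsCP E)
    {ρ : Matrix A A ℂ} (hρ : ρ.PosSemidef) : (E ρ).PosSemidef := by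
  have hM : (Matrix.of fun (p q : A × Unit) => ρ p.1 q.1).PosSemidef := by
    have := hρ.submatrix (Prod.fst : A × Unit → A)
    exact this
  have h2 := hE Unit (Matrix.of fun (p q : A × Unit) => ρ p.1 q.1) hM
  have h3 := h2.submatrix (fun a : A => ((a, ()) : A × Unit))
  exact h3

lemma psd_smul {n : Type*} [Fintype n] {M : Matrix n n ℂ} (hM : M.PosSemidef)
    {c : ℝ} (hc : 0 ≤ c) : ((c : ℂ) • M).PosSemidef := by
  refine Matrix.posSemidef_iff_dotProduct_mulVec.mpr ⟨?_, ?_⟩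
  · unfold Matrix.IsHermitian
    rw [Matrix.conjTranspose_smul, hM.1.eq]
    congr 1
    simp
  · intro x
    rw [Matrix.smul_mulVec, dotProduct_smul]
    exact mul_nonneg (by exact_mod_cast hc) (hM.dotProduct_mulVec_nonneg x)

lemma blockFst_kron (E : Matrix A A ℂ →ₗ[ℂ] Matrix A A ℂ)
    (σA : Matrix A A ℂ) (σB : Matrix B B ℂ) :
    blockFst E (σA ⊗ₖ σB) = (E σA) ⊗ₖ σB := by
  funext p q
  show E (fun i j => σA i j * σB p.2 q.2) p.1 q.1 = E σA p.1 q.1 * σB p.2 q.2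
  have : (fun i j => σA i j * σB p.2 q.2) = (σB p.2 q.2) • σA := by
    funext i j; simp [Matrix.smul_apply, mul_comm]
  rw [this, _root_.map_smul]
  simp [Matrix.smul_apply, mul_comm]

lemma blockSnd_kron (E : Matrix B B ℂ →ₗ[ℂ] Matrix B B ℂ)
    (σA : Matrix A A ℂ) (σB : Matrix B B ℂ) :
    blockSnd E (σA ⊗ₖ σB) = σA ⊗ₖ (E σB) := by
  funext p q
  show E (fun i j => σA p.1 q.1 * σB i j) p.2 q.2 = σA p.1 q.1 * E σB p.2 q.2
  have : (fun i j => σA p.1 q.1 * σB i j) = (σA p.1 q.1) • σB := by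
    funext i j; simp [Matrix.smul_apply]
  rw [this, _root_.map_smul]
  simp [Matrix.smul_apply]

lemma sepCone_zero : SepCone (0 : Matrix (A × B) (A × B) ℂ) :=
  ⟨0, ![], ![], by simp, by simp, by simp⟩

lemma sepCone_add {M N : Matrix (A × B) (A × B) ℂ} (hM : SepCone M) (hN : SepCone N) :
    SepCone (M + N) := by
  obtain ⟨m, σA, σB, h1, h2, h3⟩ := hM
  obtain ⟨n, τA, τB, h4, h5, h6⟩ := hN
  refine ⟨m + n, Fin.append σA τA, Fin.append σB τB, ?_, ?_, ?_⟩
  · intro i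
    rcases Nat.lt_or_ge i.val m with h | h
    · have : i = Fin.castAdd n ⟨i, h⟩ := by ext; simp
      rw [this, Fin.append_left]; exact h1 _
    · obtain ⟨j, rfl⟩ : ∃ j : Fin n, i = Fin.natAdd m j :=
        ⟨⟨i - m, by omega⟩, by ext; simp; omega⟩
      rw [Fin.append_right]; exact h4 _
  · intro i
    rcases Nat.lt_or_ge i.val m with h | h
    · have : i = Fin.castAdd n ⟨i, h⟩ := by ext; simp
      rw [this, Fin.append_left]; exact h2 _
    · obtain ⟨j, rfl⟩ : ∃ j : Fin n, i = Fin.natAdd m j :=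
        ⟨⟨i - m, by omega⟩, by ext; simp; omega⟩
      rw [Fin.append_right]; exact h5 _
  · rw [h3, h6, Fin.sum_univ_add]
    congr 1
    · exact Finset.sum_congr rfl fun i _ => by rw [Fin.append_left, Fin.append_left]
    · exact Finset.sum_congr rfl fun i _ => by rw [Fin.append_right, Fin.append_right]

lemma sepCone_sum {ι : Type*} (s : Finset ι) (f : ι → Matrix (A × B) (A × B) ℂ)
    (h : ∀ i ∈ s, SepCone (f i)) : SepCone (∑ i ∈ s, f i) := by
  classical
  induction s using Finset.induction with
  | empty => simpa using sepCone_zero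
  | insert _ _ hx ih =>
    rw [Finset.sum_insert hx]
    exact sepCone_add (h _ (Finset.mem_insert_self _ _))
      (ih fun i hi => h i (Finset.mem_insert_of_mem hi))

lemma blockSnd_sum {ι : Type*} (E : Matrix B B ℂ →ₗ[ℂ] Matrix B B ℂ) (s : Finset ι)
    (f : ι → Matrix (A × B) (A × B) ℂ) :
    blockSnd E (∑ i ∈ s, f i) = ∑ i ∈ s, blockSnd E (f i) := by
  funext p q
  show E (Matrix.of fun i j => (∑ x ∈ s, f x) (p.1, i) (q.1, j)) p.2 q.2
    = (∑ x ∈ s, blockSnd E (f x)) p q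
  have h1 : (Matrix.of fun i j => (∑ x ∈ s, f x) (p.1, i) (q.1, j))
      = ∑ x ∈ s, (Matrix.of fun i j => f x (p.1, i) (q.1, j)) := by
    funext i j
    simp [Matrix.sum_apply]
  rw [h1, map_sum]
  simp [Matrix.sum_apply, blockSnd]
  rfl

lemma sepCone_prod {σA : Matrix A A ℂ} {σB : Matrix B B ℂ}
    (hA : σA.PosSemidef) (hB : σB.PosSemidef) : SepCone (σA ⊗ₖ σB) :=
  ⟨1, ![σA], ![σB], by simp [hA], by simp [hB], by simp⟩

end Aux

/-- An interaction of `A` and `B` mediated by a classical system `G` (first `A`–`G`, then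
`B`–`G`), applied to a product state `ρ_A ⊗ ρ_B ⊗ p_G`, yields a separable `AB` state both
after post-selecting on any final classical value `s'` and after marginalizing over `G`. -/
theorem classical_mediator_one_round_separable
    {A B G : Type*} [Fintype A] [Fintype B] [Fintype G]
    (IA : G → G → (Matrix A A ℂ →ₗ[ℂ] Matrix A A ℂ))
    (IB : G → G → (Matrix B B ℂ →ₗ[ℂ] Matrix B B ℂ))
    (hIA : IsQCInteraction IA) (hIB : IsQCInteraction IB)
    (ρA : Matrix A A ℂ) (ρB : Matrix B B ℂ)
    (hρA : IsDensity ρA) (hρB : IsDensity ρB)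
    (p : G → ℝ) (hp : (∀ g, 0 ≤ p g) ∧ ∑ g, p g = 1) :
    let init : G → Matrix (A × B) (A × B) ℂ := fun g => (p g : ℂ) • (ρA ⊗ₖ ρB)
    let out := stepB IB (stepA IA init)
    (∀ s' : G, SepCone (out s')) ∧ SepCone (∑ g', out g') := by
  intro init out
  have key : ∀ s' : G, SepCone (out s') := by
    intro s'
    show SepCone (∑ g', blockSnd (IB g' s') (stepA IA init g'))
    refine sepCone_sum _ _ fun g' _ => ?_
    show SepCone (blockSnd (IB g' s') (∑ g, blockFst (IA g g') (init g)))
    rw [blockSnd_sum]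
    refine sepCone_sum _ _ fun g _ => ?_
    have h1 : init g = ((p g : ℂ) • ρA) ⊗ₖ ρB := by
      show (p g : ℂ) • (ρA ⊗ₖ ρB) = _
      rw [Matrix.smul_kronecker]
    rw [h1, blockFst_kron, blockSnd_kron]
    exact sepCone_prod (psd_of_cp (hIA.1 g g') (psd_smul hρA.1 (hp.1 g)))
      (psd_of_cp (hIB.1 g' s') hρB.1)
  exact ⟨key, sepCone_sum _ _ fun g' _ => key g'⟩
end

section
/- Any positive operator of the form ∑_i σ_i^A ⊗ σ_i^B with σ_i^{A,B} positive semidefinite has positive partial transpose: (id ⊗ T)(∑_i σ_i^A ⊗ σ_i^B) ⪰ 0, where T is matrix transposition on the B factor. Consequently, a bipartite state whose partial transpose has a negative eigenvalue (such as the maximally entangled state on ℂ² ⊗ ℂ²) is not separable. -/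
open Matrix Finset
open scoped Kronecker ComplexOrder

/-- Partial transpose on the `B` factor. -/
def partialTranspose {A B : Type*} (M : Matrix (A × B) (A × B) ℂ) :
    Matrix (A × B) (A × B) ℂ :=
  fun p q => M (p.1, q.2) (q.1, p.2)

/-- The maximally entangled Bell vector on `ℂ² ⊗ ℂ²`. -/
noncomputable def bell : Fin 2 × Fin 2 → ℂ :=
  fun z => if z.1 = z.2 then ((Real.sqrt 2 : ℂ))⁻¹ else 0

lemma conjTranspose_kron {A B : Type*} [Fintype A] [Fintype B]
    (M : Matrix A A ℂ) (N : Matrix B B ℂ) : (M ⊗ₖ N)ᴴ = Mᴴ ⊗ₖ Nᴴ := by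
  ext p q
  simp [Matrix.conjTranspose_apply, Matrix.kroneckerMap_apply, mul_comm]

lemma kron_psd {A B : Type*} [Fintype A] [Fintype B]
    {M : Matrix A A ℂ} {N : Matrix B B ℂ}
    (hM : M.PosSemidef) (hN : N.PosSemidef) : (M ⊗ₖ N).PosSemidef := by
  classical
  exact hM.kronecker hN

lemma sum_psd {A : Type*} [Fintype A] {n : ℕ} {f : Fin n → Matrix A A ℂ}
    (h : ∀ i, (f i).PosSemidef) : (∑ i, f i).PosSemidef := by
  classical
  refine Finset.sum_induction f _ (fun a b ha hb => ha.add hb) Matrix.PosSemidef.zero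
    (fun i _ => h i)


lemma sep_ppt {A B : Type*} [Fintype A] [Fintype B] :
    ∀ M : Matrix (A × B) (A × B) ℂ, SepCone M → (partialTranspose M).PosSemidef := by
  rintro M ⟨n, σA, σB, hA, hB, rfl⟩
  have heq : partialTranspose (∑ i, σA i ⊗ₖ σB i) = ∑ i, σA i ⊗ₖ (σB i)ᵀ := by
    ext p q
    simp [partialTranspose, Matrix.sum_apply, Matrix.kroneckerMap_apply,
      Matrix.transpose_apply]
  rw [heq]
  exact sum_psd fun i => kron_psd (hA i) (hB i).transpose

/-- Separable operators have positive partial transpose; consequently any state whose partial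
transpose is not positive semidefinite—such as the maximally entangled state on `ℂ² ⊗ ℂ²`—is
not separable. -/
theorem PPT_criterion
    {A B : Type*} [Fintype A] [Fintype B] :
    (∀ M : Matrix (A × B) (A × B) ℂ, SepCone M → (partialTranspose M).PosSemidef) ∧
    (∀ ρ : Matrix (A × B) (A × B) ℂ, ¬ (partialTranspose ρ).PosSemidef → ¬ SepCone ρ) ∧
    ¬ SepCone (Matrix.vecMulVec bell (star bell)) := by
  refine ⟨sep_ppt, fun ρ hρ hsep => hρ (sep_ppt ρ hsep), fun hsep => ?_⟩
  have hPSD := sep_ppt _ hsep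
  set x : Fin 2 × Fin 2 → ℂ :=
    fun p => if p = (0, 1) then 1 else if p = (1, 0) then -1 else 0 with hx
  have hnn := hPSD.dotProduct_mulVec_nonneg x
  have hval : star x ⬝ᵥ (partialTranspose (Matrix.vecMulVec bell (star bell))) *ᵥ x
      = -1 := by
    have h2 : ((Real.sqrt 2 : ℂ))⁻¹ * ((Real.sqrt 2 : ℂ))⁻¹ = 2⁻¹ := by
      rw [← mul_inv, ← Complex.ofReal_mul, Real.mul_self_sqrt (by norm_num)]
      norm_num
    simp only [dotProduct, Matrix.mulVec, partialTranspose, Matrix.vecMulVec_apply,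
      bell, hx, Fintype.sum_prod_type, Fin.sum_univ_two]
    have hb0 : bell 0 = ((Real.sqrt 2 : ℂ))⁻¹ := by simp [bell]
    have hb1 : bell 1 = ((Real.sqrt 2 : ℂ))⁻¹ := by simp [bell]
    have hb00 : bell (0, 0) = ((Real.sqrt 2 : ℂ))⁻¹ := by simp [bell]
    have hb11 : bell (1, 1) = ((Real.sqrt 2 : ℂ))⁻¹ := by simp [bell]
    norm_num [Prod.ext_iff, map_inv₀, Complex.conj_ofReal, hb0, hb1, hb00, hb11, h2]
  rw [hval] at hnn
  simp [Complex.le_def] at hnn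
  linarith
end
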